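/- Let A, B, A', B' be symmetric n×n complex matrices with A ≠ 0 such that B'yA + AyB' = ByA' + A'yB for every symmetric matrix y. Then either B = k·A or A' = k·A for some scalar k. -/

import Mathlib

open Matrix Polynomial

private lemma span_of_ortho {n : ℕ} (a b : Fin n → ℂ) (ha : a ≠ 0)
    (h : ∀ w, a ⬝ᵥ w = 0 → b ⬝ᵥ w = 0) : ∃ k : ℂ, b = k • a := by
  obtain ⟨i, hi⟩ := Function.ne_iff.mp ha
  simp only [Pi.zero_apply] at hi
  refine ⟨b i / a i, funext fun j => ?_⟩
  have hw := h (a i • (Pi.single j 1 : Fin n → ℂ) - a j • (Pi.single i 1 : Fin n → ℂ)) (by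
    simp [dotProduct_sub, dotProduct_smul, dotProduct_single]
    ring)
  simp [dotProduct_sub, dotProduct_smul, dotProduct_single, smul_eq_mul] at hw
  have : b j = b i / a i * a j := by field_simp; linear_combination hw
  simpa using this

private lemma exists_dual {n : ℕ} (a b : Fin n → ℂ) (ha : a ≠ 0) (hb : ¬ ∃ k : ℂ, b = k • a) :
    ∃ w, a ⬝ᵥ w = 0 ∧ b ⬝ᵥ w = 1 := by
  by_cases h : ∃ w, a ⬝ᵥ w = 0 ∧ b ⬝ᵥ w ≠ 0
  · obtain ⟨w, hw0, hw1⟩ := h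
    exact ⟨(b ⬝ᵥ w)⁻¹ • w, by simp [hw0], by rw [dotProduct_smul, smul_eq_mul, inv_mul_cancel₀ hw1]⟩
  · push_neg at h
    exact absurd (span_of_ortho a b ha h) hb

private lemma pointwise {n : ℕ} (a p b q : Fin n → ℂ)
    (hS : ∀ i j, p i * a j + a i * p j = b i * q j + q i * b j) :
    (∃ k : ℂ, b = k • a) ∨ (∃ k : ℂ, q = k • a) := by
  by_cases ha : a = 0
  · subst ha
    simp only [Pi.zero_apply, zero_mul, mul_zero, add_zero] at hS
    by_cases hb : b = 0
    · exact Or.inl ⟨0, by simp [hb]⟩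
    · right
      obtain ⟨i, hi⟩ := Function.ne_iff.mp hb
      simp only [Pi.zero_apply] at hi
      have hqi : q i = 0 := by
        have h5 : b i * q i = 0 := by linear_combination -(hS i i) / 2
        rcases mul_eq_zero.mp h5 with h' | h'
        · exact absurd h' hi
        · exact h'
      refine ⟨0, funext fun j => ?_⟩
      have h5 : b i * q j = 0 := by linear_combination -(hS i j) - b j * hqi
      rcases mul_eq_zero.mp h5 with h' | h'
      · exact absurd h' hi
      · simp [h']
  · by_cases hb : ∃ k : ℂ, b = k • a
    · exact Or.inl hb
    · right
      obtain ⟨w, hw0, hw1⟩ := exists_dual a b ha hb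
      have h2 : ∀ i, a i * (p ⬝ᵥ w) = b i * (q ⬝ᵥ w) + q i := by
        intro i
        have e1 : p i * (a ⬝ᵥ w) + a i * (p ⬝ᵥ w) = ∑ j, (p i * a j + a i * p j) * w j := by
          rw [dotProduct, dotProduct, Finset.mul_sum, Finset.mul_sum, ← Finset.sum_add_distrib]
          exact Finset.sum_congr rfl fun j _ => by ring
        have e2 : b i * (q ⬝ᵥ w) + q i * (b ⬝ᵥ w) = ∑ j, (b i * q j + q i * b j) * w j := by
          rw [dotProduct, dotProduct, Finset.mul_sum, Finset.mul_sum, ← Finset.sum_add_distrib]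
          exact Finset.sum_congr rfl fun j _ => by ring
        have h0 : ∑ j, (p i * a j + a i * p j) * w j = ∑ j, (b i * q j + q i * b j) * w j :=
          Finset.sum_congr rfl fun j _ => by rw [hS i j]
        have := (e1.trans h0).trans e2.symm
        rw [hw0, hw1] at this
        linear_combination this
      have hqw : q ⬝ᵥ w = 0 := by
        have e3 : (a ⬝ᵥ w) * (p ⬝ᵥ w) = ∑ i, (a i * (p ⬝ᵥ w)) * w i := by
          rw [dotProduct, Finset.sum_mul]
          exact Finset.sum_congr rfl fun i _ => by ring
        have e4 : ∑ i, (b i * (q ⬝ᵥ w) + q i) * w i = (b ⬝ᵥ w) * (q ⬝ᵥ w) + q ⬝ᵥ w := by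
          rw [dotProduct, dotProduct, Finset.sum_mul, ← Finset.sum_add_distrib]
          exact Finset.sum_congr rfl fun i _ => by ring
        have h3 : ∑ i, (a i * (p ⬝ᵥ w)) * w i = ∑ i, (b i * (q ⬝ᵥ w) + q i) * w i :=
          Finset.sum_congr rfl fun i _ => by rw [h2 i]
        have h4 := (e3.trans h3).trans e4
        rw [hw0, hw1] at h4
        linear_combination (-(1:ℂ)/2) * h4
      refine ⟨p ⬝ᵥ w, funext fun i => ?_⟩
      have h5 := h2 i
      rw [hqw] at h5
      simpa [mul_comm] using h5.symm

private lemma triple_apply {n : ℕ} (M N : Matrix (Fin n) (Fin n) ℂ) (x : Fin n → ℂ) (i j : Fin n) :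
    (M * vecMulVec x x * N) i j = (M *ᵥ x) i * (Nᵀ *ᵥ x) j := by
  simp only [Matrix.mul_apply, vecMulVec_apply, mulVec, dotProduct, transpose_apply,
    Finset.sum_mul, Finset.mul_sum]
  exact Finset.sum_congr rfl fun k _ => Finset.sum_congr rfl fun l _ => by ring

private lemma vecMulVec_symm {n : ℕ} (x : Fin n → ℂ) : (vecMulVec x x)ᵀ = vecMulVec x x := by
  ext i j; simp [vecMulVec_apply, transpose_apply, mul_comm]

private lemma minor_to_prop {n : ℕ} (a b : Fin n → ℂ) (ha : a ≠ 0)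
    (hm : ∀ i j, a i * b j = a j * b i) : ∃ c : ℂ, b = c • a := by
  obtain ⟨i, hi⟩ := Function.ne_iff.mp ha
  simp only [Pi.zero_apply] at hi
  refine ⟨b i / a i, funext fun j => ?_⟩
  have := hm i j
  rw [Pi.smul_apply, smul_eq_mul]
  field_simp
  linear_combination this

private lemma exists_mulVec_ne {n : ℕ} (A : Matrix (Fin n) (Fin n) ℂ) (hA : A ≠ 0) :
    ∃ v, A *ᵥ v ≠ 0 := by
  by_contra hc
  push_neg at hc
  apply hA
  ext i j
  have := congrFun (hc (Pi.single j 1)) i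
  simpa [mulVec_single] using this

private lemma prop_of_minors {n : ℕ} (A B : Matrix (Fin n) (Fin n) ℂ) (hA : Aᵀ = A) (hB : Bᵀ = B)
    (hAne : A ≠ 0)
    (hm : ∀ (u : Fin n → ℂ) (i j : Fin n), (A *ᵥ u) i * (B *ᵥ u) j = (A *ᵥ u) j * (B *ᵥ u) i) :
    ∃ k : ℂ, B = k • A := by
  have s1 : ∀ u, A *ᵥ u ≠ 0 → ∃ c : ℂ, B *ᵥ u = c • (A *ᵥ u) :=
    fun u hu => minor_to_prop _ _ hu (hm u)
  have hsymA : ∀ x, x ᵥ* A = A *ᵥ x := fun x => by rw [← mulVec_transpose, hA]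
  have hsymB : ∀ x, x ᵥ* B = B *ᵥ x := fun x => by rw [← mulVec_transpose, hB]
  obtain ⟨v₀, hv₀⟩ := exists_mulVec_ne A hAne
  -- kernel step
  have s2 : ∀ u, A *ᵥ u = 0 → B *ᵥ u = 0 := by
    intro u hu
    by_contra hw
    set w := B *ᵥ u with hwdef
    have hrep : ∀ v, ∃ lam : ℂ, A *ᵥ v = lam • w := by
      intro v
      refine minor_to_prop w (A *ᵥ v) hw fun i j => ?_
      have h1 := hm (v + u) i j
      have h2 := hm v i j
      rw [mulVec_add, mulVec_add, hu, add_zero] at h1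
      simp only [Pi.add_apply, ← hwdef] at h1
      linear_combination h2 - h1
    have huw : u ⬝ᵥ w = 0 := by
      obtain ⟨lam₀, hlam₀⟩ := hrep v₀
      have hlam₀ne : lam₀ ≠ 0 := by
        intro h; rw [h, zero_smul] at hlam₀; exact hv₀ hlam₀
      have h1 : u ⬝ᵥ (A *ᵥ v₀) = 0 := by
        rw [dotProduct_mulVec, hsymA, hu, zero_dotProduct]
      rw [hlam₀, dotProduct_smul, smul_eq_mul] at h1
      exact (mul_eq_zero.mp h1).resolve_left hlam₀ne
    have hz : ∀ y, A *ᵥ y ≠ 0 → w ⬝ᵥ y = 0 := by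
      intro y hy
      obtain ⟨c, hc⟩ := s1 y hy
      obtain ⟨lam, hlam⟩ := hrep y
      have h1 : w ⬝ᵥ y = u ⬝ᵥ (B *ᵥ y) := by
        rw [hwdef, ← hsymB, ← dotProduct_mulVec]
      rw [h1, hc, hlam, smul_smul, dotProduct_smul, smul_eq_mul, huw, mul_zero]
    obtain ⟨j₀, hj₀⟩ := Function.ne_iff.mp hw
    simp only [Pi.zero_apply] at hj₀
    have hwz : w ⬝ᵥ (Pi.single j₀ 1 : Fin n → ℂ) = w j₀ := by
      rw [dotProduct_single, mul_one]
    by_cases hz0 : A *ᵥ (Pi.single j₀ 1 : Fin n → ℂ) = 0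
    · have h1 := hz ((Pi.single j₀ 1 : Fin n → ℂ) + v₀)
        (by rw [mulVec_add, hz0, zero_add]; exact hv₀)
      have h2 := hz v₀ hv₀
      rw [dotProduct_add, hwz, h2, add_zero] at h1
      exact hj₀ h1
    · have h1 := hz _ hz0
      rw [hwz] at h1
      exact hj₀ h1
  -- gluing
  obtain ⟨c₀, hc₀⟩ := s1 v₀ hv₀
  have hall : ∀ v, B *ᵥ v = c₀ • (A *ᵥ v) := by
    intro v
    by_cases hv : A *ᵥ v = 0
    · rw [hv, s2 v hv, smul_zero]
    · obtain ⟨c, hc⟩ := s1 v hv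
      by_cases hmu : ∃ μ : ℂ, A *ᵥ v = μ • (A *ᵥ v₀)
      · obtain ⟨μ, hμe⟩ := hmu
        have hker : A *ᵥ (v - μ • v₀) = 0 := by
          rw [mulVec_sub, mulVec_smul, hμe, sub_self]
        have h3 := s2 _ hker
        rw [mulVec_sub, mulVec_smul, sub_eq_zero] at h3
        rw [h3, hc₀, hμe, smul_comm]
      · push_neg at hmu
        have hvv : A *ᵥ (v + v₀) ≠ 0 := by
          intro h0
          rw [mulVec_add] at h0
          exact hmu (-1) (by rw [neg_smul, one_smul, eq_neg_iff_add_eq_zero]; exact h0)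
        obtain ⟨c'', hc''⟩ := s1 _ hvv
        rw [mulVec_add, mulVec_add, hc, hc₀] at hc''
        -- c • Av + c₀ • Av₀ = c'' • (Av + Av₀)
        have key : (c - c'') • (A *ᵥ v) = (c'' - c₀) • (A *ᵥ v₀) := by
          have := hc''
          funext i
          have h4 := congrFun this i
          simp only [Pi.add_apply, Pi.smul_apply, smul_eq_mul] at h4 ⊢
          linear_combination h4
        by_cases hce : c = c''
        · have h5 : (c'' - c₀) • (A *ᵥ v₀) = 0 := by
            rw [← key, hce, sub_self, zero_smul]
          have h6 : c'' = c₀ := by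
            rcases smul_eq_zero.mp h5 with h' | h'
            · exact sub_eq_zero.mp h'
            · exact absurd h' hv₀
          rw [hc, hce, h6]
        · exfalso
          refine hmu ((c'' - c₀) / (c - c'')) ?_
          have hcc : c - c'' ≠ 0 := sub_ne_zero.mpr hce
          funext i
          have h4 := congrFun key i
          simp only [Pi.smul_apply, smul_eq_mul] at h4 ⊢
          field_simp
          linear_combination h4
  refine ⟨c₀, ?_⟩
  ext i j
  have := congrFun (hall (Pi.single j 1)) i
  simpa [mulVec_single] using this

private lemma dichotomy {n : ℕ} (M N M' N' : Matrix (Fin n) (Fin n) ℂ)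
    (key : ∀ u : Fin n → ℂ,
      (∀ i j, (M *ᵥ u) i * (N *ᵥ u) j = (M *ᵥ u) j * (N *ᵥ u) i) ∨
      (∀ i j, (M' *ᵥ u) i * (N' *ᵥ u) j = (M' *ᵥ u) j * (N' *ᵥ u) i)) :
    (∀ u : Fin n → ℂ, ∀ i j, (M *ᵥ u) i * (N *ᵥ u) j = (M *ᵥ u) j * (N *ᵥ u) i) ∨
    (∀ u : Fin n → ℂ, ∀ i j, (M' *ᵥ u) i * (N' *ᵥ u) j = (M' *ᵥ u) j * (N' *ᵥ u) i) := by
  by_contra hc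
  push_neg at hc
  obtain ⟨⟨u₁, i₁, j₁, ne₁⟩, ⟨u₂, i₂, j₂, ne₂⟩⟩ := hc
  set a₁ := M *ᵥ u₁; set b₁ := N *ᵥ u₁; set a₂ := M *ᵥ u₂; set b₂ := N *ᵥ u₂
  set c₁ := M' *ᵥ u₁; set d₁ := N' *ᵥ u₁; set c₂ := M' *ᵥ u₂; set d₂ := N' *ᵥ u₂
  set Q : Polynomial ℂ :=
    C (a₂ i₁ * b₂ j₁ - a₂ j₁ * b₂ i₁)
      + C (a₂ i₁ * b₁ j₁ + a₁ i₁ * b₂ j₁ - a₂ j₁ * b₁ i₁ - a₁ j₁ * b₂ i₁) * X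
      + C (a₁ i₁ * b₁ j₁ - a₁ j₁ * b₁ i₁) * X ^ 2 with hQ
  set R : Polynomial ℂ :=
    C (c₂ i₂ * d₂ j₂ - c₂ j₂ * d₂ i₂)
      + C (c₂ i₂ * d₁ j₂ + c₁ i₂ * d₂ j₂ - c₂ j₂ * d₁ i₂ - c₁ j₂ * d₂ i₂) * X
      + C (c₁ i₂ * d₁ j₂ - c₁ j₂ * d₁ i₂) * X ^ 2 with hR
  have hQR : Q * R = 0 := by
    apply Polynomial.funext
    intro t
    rw [eval_mul, eval_zero]
    have hMA : M *ᵥ (u₂ + t • u₁) = a₂ + t • a₁ := by rw [mulVec_add, mulVec_smul]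
    have hNA : N *ᵥ (u₂ + t • u₁) = b₂ + t • b₁ := by rw [mulVec_add, mulVec_smul]
    have hMA' : M' *ᵥ (u₂ + t • u₁) = c₂ + t • c₁ := by rw [mulVec_add, mulVec_smul]
    have hNA' : N' *ᵥ (u₂ + t • u₁) = d₂ + t • d₁ := by rw [mulVec_add, mulVec_smul]
    rcases key (u₂ + t • u₁) with hk | hk
    · have := hk i₁ j₁
      rw [hMA, hNA] at this
      simp only [Pi.add_apply, Pi.smul_apply, smul_eq_mul] at this
      have hQ0 : Q.eval t = 0 := by
        rw [hQ]
        simp only [eval_add, eval_mul, eval_C, eval_X, eval_pow]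
        linear_combination this
      rw [hQ0, zero_mul]
    · have := hk i₂ j₂
      rw [hMA', hNA'] at this
      simp only [Pi.add_apply, Pi.smul_apply, smul_eq_mul] at this
      have hR0 : R.eval t = 0 := by
        rw [hR]
        simp only [eval_add, eval_mul, eval_C, eval_X, eval_pow]
        linear_combination this
      rw [hR0, mul_zero]
  have hQne : Q ≠ 0 := by
    intro h
    have h0 : Q.coeff 2 = 0 := by rw [h]; simp
    have h2 : Q.coeff 2 = a₁ i₁ * b₁ j₁ - a₁ j₁ * b₁ i₁ := by
      rw [hQ, coeff_add, coeff_add, coeff_C, coeff_C_mul, coeff_C_mul, coeff_X_pow, coeff_X]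
      norm_num
    rw [h0] at h2
    exact ne₁ (by linear_combination -h2)
  have hRne : R ≠ 0 := by
    intro h
    have h0 : R.coeff 0 = 0 := by rw [h]; simp
    have h2 : R.coeff 0 = c₂ i₂ * d₂ j₂ - c₂ j₂ * d₂ i₂ := by
      rw [hR, coeff_add, coeff_add, coeff_C, coeff_C_mul, coeff_C_mul, coeff_X_pow, coeff_X]
      norm_num
    rw [h0] at h2
    exact ne₂ (by linear_combination -h2)
  exact mul_ne_zero hQne hRne hQR

/-- If symmetric complex matrices satisfy `B'yA + AyB' = ByA' + A'yB` for all symmetric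
`y`, and `A ≠ 0`, then `B = k·A` or `A' = k·A` for some scalar `k`. -/
theorem stmt_14 {n : ℕ}
    (A A' B B' : Matrix (Fin n) (Fin n) ℂ)
    (hA : Aᵀ = A) (hA' : A'ᵀ = A') (hB : Bᵀ = B) (hB' : B'ᵀ = B')
    (hAne : A ≠ 0)
    (h : ∀ y : Matrix (Fin n) (Fin n) ℂ, yᵀ = y →
      B' * y * A + A * y * B' = B * y * A' + A' * y * B) :
    (∃ k : ℂ, B = k • A) ∨ (∃ k : ℂ, A' = k • A) := by
  have key : ∀ u : Fin n → ℂ,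
      (∃ k : ℂ, B *ᵥ u = k • (A *ᵥ u)) ∨ (∃ k : ℂ, A' *ᵥ u = k • (A *ᵥ u)) := by
    intro u
    apply pointwise (A *ᵥ u) (B' *ᵥ u) (B *ᵥ u) (A' *ᵥ u)
    intro i j
    have hy := h (vecMulVec u u) (vecMulVec_symm u)
    have e := congrFun (congrFun hy i) j
    have t1 := triple_apply B' A u i j
    have t2 := triple_apply A B' u i j
    have t3 := triple_apply B A' u i j
    have t4 := triple_apply A' B u i j
    rw [hA] at t1; rw [hB'] at t2; rw [hA'] at t3; rw [hB] at t4
    simp only [Matrix.add_apply] at e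
    rw [t1, t2, t3, t4] at e
    linear_combination e
  have keyM := dichotomy A B A A' (fun u => (key u).imp
    (fun hk i j => by obtain ⟨k, hk⟩ := hk; rw [hk]; simp only [Pi.smul_apply, smul_eq_mul]; ring)
    (fun hk i j => by obtain ⟨k, hk⟩ := hk; rw [hk]; simp only [Pi.smul_apply, smul_eq_mul]; ring))
  rcases keyM with hm | hm
  · exact Or.inl (prop_of_minors A B hA hB hAne hm)
  · exact Or.inr (prop_of_minors A A' hA hA' hAne hm)
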